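/- With the setup of the projection p and face Q with Q + e_n ⊆ Q: p(M_Q \ M_Q') = M_{Q'} \ M_{Q'}' and V_Q = p^{-1}(V_{Q'}); consequently R_Q = R_{Q'}. -/

import Mathlib

open Set

namespace BS

def toR {n : ℕ} (u : Fin n → ℤ) : Fin n → ℝ := fun i => (u i : ℝ)

def natR {n : ℕ} (u : Fin n → ℕ) : Fin n → ℝ := fun i => (u i : ℝ)

def natZ {n : ℕ} (u : Fin n → ℕ) : Fin n → ℤ := fun i => (u i : ℤ)

/-- `Γ` is the exponent set of a nonzero monomial ideal. -/
def IsMonIdeal {n : ℕ} (Γ : Set (Fin n → ℕ)) : Prop :=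
  Γ.Nonempty ∧ ∀ u ∈ Γ, ∀ w : Fin n → ℕ, u + w ∈ Γ

/-- The Newton polyhedron: convex hull of the exponent set. -/
def newton {n : ℕ} (Γ : Set (Fin n → ℕ)) : Set (Fin n → ℝ) :=
  convexHull ℝ (natR '' Γ)

/-- The subsemigroup (containing 0) of ℤⁿ generated by differences u - v,
u ∈ Γ, v ∈ Γ ∩ Q. -/
def diffMonoid {n : ℕ} (Γ : Set (Fin n → ℕ)) (Q : Set (Fin n → ℝ)) :
    AddSubmonoid (Fin n → ℤ) :=
  AddSubmonoid.closure {d | ∃ u ∈ Γ, ∃ v ∈ Γ, natR v ∈ Q ∧ d = natZ u - natZ v}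

/-- M_Q : the translate by e = (1,...,1) of the difference semigroup. -/
def MQ {n : ℕ} (Γ : Set (Fin n → ℕ)) (Q : Set (Fin n → ℝ)) : Set (Fin n → ℤ) :=
  {m | m - 1 ∈ diffMonoid Γ Q}

/-- M_Q^{(k)} = k·v₀ + M_Q. -/
def MQk {n : ℕ} (Γ : Set (Fin n → ℕ)) (Q : Set (Fin n → ℝ)) (v0 : Fin n → ℕ) (k : ℕ) :
    Set (Fin n → ℤ) :=
  {m | m - (k : ℤ) • natZ v0 ∈ MQ Γ Q}

/-- V_Q : linear span of the face Q. -/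
def VQ {n : ℕ} (Q : Set (Fin n → ℝ)) : Submodule ℝ (Fin n → ℝ) := Submodule.span ℝ Q

/-- R_Q = { -L_Q(u) : u ∈ (M_Q \ M_Q') ∩ V_Q }. -/
def RQ {n : ℕ} (Γ : Set (Fin n → ℕ)) (Q : Set (Fin n → ℝ)) (v0 : Fin n → ℕ)
    (L : (Fin n → ℝ) →ₗ[ℝ] ℝ) : Set ℝ :=
  {x | ∃ u ∈ MQ Γ Q \ MQk Γ Q v0 1, toR u ∈ VQ Q ∧ x = - L (toR u)}

/-- Q is contained in some coordinate hyperplane. -/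
def InCoordHyp {n : ℕ} (Q : Set (Fin n → ℝ)) : Prop := ∃ i, ∀ q ∈ Q, q i = 0

/-- The subgroup G_Q of ℤⁿ generated by differences of elements of Γ ∩ Q. -/
def diffGroup {n : ℕ} (Γ : Set (Fin n → ℕ)) (Q : Set (Fin n → ℝ)) :
    AddSubgroup (Fin n → ℤ) :=
  AddSubgroup.closure
    {d | ∃ u ∈ Γ, natR u ∈ Q ∧ ∃ v ∈ Γ, natR v ∈ Q ∧ d = natZ u - natZ v}

end BS

namespace BS
/-- Projection forgetting the last coordinate. -/
def pR {n : ℕ} : (Fin (n+1) → ℝ) → (Fin n → ℝ) := fun x => x ∘ Fin.castSucc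
def pN {n : ℕ} : (Fin (n+1) → ℕ) → (Fin n → ℕ) := fun x => x ∘ Fin.castSucc
def pZ {n : ℕ} : (Fin (n+1) → ℤ) → (Fin n → ℤ) := fun x => x ∘ Fin.castSucc
end BS

namespace BS
variable {n : ℕ}

def pZhom : (Fin (n+1) → ℤ) →+ (Fin n → ℤ) where
  toFun := pZ
  map_zero' := rfl
  map_add' _ _ := rfl

lemma pZ_surj : Function.Surjective (pZ (n := n)) := fun x =>
  ⟨Fin.snoc x 0, by funext j; simp [pZ]⟩

lemma natZ_add (a b : Fin (n+1) → ℕ) : natZ (a + b) = natZ a + natZ b := by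
  funext i; simp [natZ]

lemma natZ_single (i : Fin (n+1)) (k : ℕ) : natZ (Pi.single i k) = Pi.single i (k : ℤ) := by
  funext j; simp [natZ, Pi.single_apply, apply_ite (fun x : ℕ => (x : ℤ))]

lemma natR_add (a b : Fin (n+1) → ℕ) : natR (a + b) = natR a + natR b := by
  funext i; simp [natR]

lemma natR_single (i : Fin (n+1)) (k : ℕ) : natR (Pi.single i k) = Pi.single i (k : ℝ) := by
  funext j; simp [natR, Pi.single_apply, apply_ite (fun x : ℕ => (x : ℝ))]

lemma single_eq_of_proj_eq {M : Type*} [AddCommGroup M] {a b : Fin (n+1) → M}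
    (h : ∀ j : Fin n, a (Fin.castSucc j) = b (Fin.castSucc j)) :
    a = b + Pi.single (Fin.last n) (a (Fin.last n) - b (Fin.last n)) := by
  funext i
  induction i using Fin.lastCases with
  | last => simp
  | cast j => simp [h j, Pi.single_eq_of_ne (Fin.castSucc_lt_last j).ne]

section Main
variable {Γ : Set (Fin (n+1) → ℕ)} {Q : Set (Fin (n+1) → ℝ)}
  (hΓ : IsMonIdeal Γ) (hQe : ∀ q ∈ Q, q + Pi.single (Fin.last n) 1 ∈ Q)
  {v0 : Fin (n+1) → ℕ} (hv0 : v0 ∈ Γ) (hv0Q : natR v0 ∈ Q)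

include hΓ hQe hv0 hv0Q in
/-- Any ℤ-multiple of e_last belongs to the difference monoid. -/
lemma single_last_mem (t : ℤ) : Pi.single (Fin.last n) t ∈ diffMonoid Γ Q := by
  have hv1 : v0 + Pi.single (Fin.last n) 1 ∈ Γ := hΓ.2 v0 hv0 _
  have hv1Q : natR (v0 + Pi.single (Fin.last n) 1) ∈ Q := by
    rw [natR_add, natR_single]
    exact_mod_cast hQe _ hv0Q
  have he : Pi.single (Fin.last n) (1 : ℤ) ∈ diffMonoid Γ Q := by
    apply AddSubmonoid.subset_closure
    exact ⟨v0 + Pi.single (Fin.last n) 1, hv1, v0, hv0, hv0Q, by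
      rw [natZ_add, natZ_single]; abel⟩
  have hme : Pi.single (Fin.last n) (-1 : ℤ) ∈ diffMonoid Γ Q := by
    apply AddSubmonoid.subset_closure
    exact ⟨v0, hv0, v0 + Pi.single (Fin.last n) 1, hv1, hv1Q, by
      rw [natZ_add, natZ_single]; funext j; simp [Pi.single_apply]; split <;> ring⟩
  induction t using Int.induction_on with
  | zero => simpa using (diffMonoid Γ Q).zero_mem
  | succ k ih => rw [show ((k : ℤ) + 1) = k + 1 from rfl, Pi.single_add]
                 exact (diffMonoid Γ Q).add_mem ih he
  | pred k ih => rw [show (-(k : ℤ) - 1) = -k + (-1) by ring, Pi.single_add]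
                 exact (diffMonoid Γ Q).add_mem ih hme

include hΓ hQe in
/-- Lifting of elements of Γ' ∩ Q' to Γ ∩ Q. -/
lemma lift_mem (hconv : Convex ℝ Q) {v' : Fin n → ℕ}
    (hv' : v' ∈ pN '' Γ) (hq' : natR v' ∈ pR '' Q) :
    ∃ v ∈ Γ, natR v ∈ Q ∧ pN v = v' := by
  obtain ⟨w, hw, rfl⟩ := hv'
  obtain ⟨q, hq, hpq⟩ := hq'
  set c : ℝ := q (Fin.last n) with hc
  set k : ℕ := ⌈c⌉₊ with hk
  set m : ℕ := w (Fin.last n) + k with hm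
  set N : ℕ := m + ⌈-c⌉₊ + 1 with hN
  have hray : ∀ t : ℕ, q + (t : ℝ) • (Pi.single (Fin.last n) 1 : Fin (n+1) → ℝ) ∈ Q := by
    intro t
    induction t with
    | zero => simpa using hq
    | succ t ih =>
        have h2 := hQe _ ih
        have : q + ((t + 1 : ℕ) : ℝ) • (Pi.single (Fin.last n) 1 : Fin (n+1) → ℝ)
            = (q + (t : ℝ) • (Pi.single (Fin.last n) 1 : Fin (n+1) → ℝ)) + Pi.single (Fin.last n) 1 := by
          push_cast; rw [add_smul, one_smul]; abel
        rw [this]; exact h2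
  have hmc : c ≤ (m : ℝ) := le_trans (Nat.le_ceil c) (by exact_mod_cast Nat.le_add_left k _)
  have hNc : (m : ℝ) - c ≤ N := by
    have h1 : -c ≤ (⌈-c⌉₊ : ℝ) := Nat.le_ceil _
    have h2 : (N : ℝ) = m + ⌈-c⌉₊ + 1 := by rw [hN]; push_cast; ring
    linarith
  have hN0 : (0 : ℝ) < N := by exact_mod_cast Nat.succ_pos _
  set θ : ℝ := ((m : ℝ) - c) / N with hθ
  have hθ0 : 0 ≤ θ := div_nonneg (by linarith) hN0.le
  have hθ1 : θ ≤ 1 := by rw [hθ, div_le_one hN0]; linarith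
  have key : q + ((m : ℝ) - c) • (Pi.single (Fin.last n) 1 : Fin (n+1) → ℝ) ∈ Q := by
    have h2 := hconv hq (hray N) (by linarith : (0:ℝ) ≤ 1 - θ) hθ0 (by ring)
    have h3 : (1 - θ) • q + θ • (q + (N : ℝ) • (Pi.single (Fin.last n) 1 : Fin (n+1) → ℝ))
        = q + (θ * N) • (Pi.single (Fin.last n) 1 : Fin (n+1) → ℝ) := by
      rw [smul_add, smul_smul, sub_smul, one_smul]; abel
    have h4 : θ * N = (m : ℝ) - c := div_mul_cancel₀ _ hN0.ne'
    rw [h3, h4] at h2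
    exact h2
  refine ⟨w + Pi.single (Fin.last n) k, hΓ.2 w hw _, ?_, ?_⟩
  · have : natR (w + Pi.single (Fin.last n) k)
        = q + ((m : ℝ) - c) • (Pi.single (Fin.last n) 1 : Fin (n+1) → ℝ) := by
      funext i
      induction i using Fin.lastCases with
      | last =>
          have hmr : (m : ℝ) = (w (Fin.last n) : ℝ) + k := by rw [hm]; push_cast; ring
          simp only [natR, Pi.add_apply, Pi.smul_apply, Pi.single_eq_same, smul_eq_mul,
            mul_one, Nat.cast_add]
          linarith [hmr]
      | cast j =>
          have hqj : q (Fin.castSucc j) = (w (Fin.castSucc j) : ℝ) := congrFun hpq j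
          simp [natR, Pi.single_eq_of_ne (Fin.castSucc_lt_last j).ne, hqj]
    rw [this]; exact key
  · funext j
    simp [pN, Pi.single_eq_of_ne (Fin.castSucc_lt_last j).ne]

include hΓ hQe hv0 hv0Q in
lemma diffMonoid_iff (hconv : Convex ℝ Q) (m : Fin (n+1) → ℤ) :
    m ∈ diffMonoid Γ Q ↔ pZ m ∈ diffMonoid (pN '' Γ) (pR '' Q) := by
  constructor
  · intro hm
    have hle : diffMonoid Γ Q ≤
        AddSubmonoid.comap (pZhom (n := n)) (diffMonoid (pN '' Γ) (pR '' Q)) := by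
      apply AddSubmonoid.closure_le.2
      rintro d ⟨u, hu, v, hv, hvQ, rfl⟩
      apply AddSubmonoid.subset_closure
      exact ⟨pN u, ⟨u, hu, rfl⟩, pN v, ⟨v, hv, rfl⟩, ⟨natR v, hvQ, rfl⟩, rfl⟩
    exact hle hm
  · intro hm
    have hmap : AddSubmonoid.map (pZhom (n := n)) (diffMonoid Γ Q)
        = diffMonoid (pN '' Γ) (pR '' Q) := by
      rw [diffMonoid, AddMonoidHom.map_mclosure]
      congr 1
      apply Set.Subset.antisymm
      · rintro _ ⟨d, ⟨u, hu, v, hv, hvQ, rfl⟩, rfl⟩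
        exact ⟨pN u, ⟨u, hu, rfl⟩, pN v, ⟨v, hv, rfl⟩, ⟨natR v, hvQ, rfl⟩, rfl⟩
      · rintro d ⟨u', ⟨u, hu, rfl⟩, v', hv', hvQ', rfl⟩
        obtain ⟨v, hv, hvQ, rfl⟩ := lift_mem hΓ hQe hconv hv' hvQ'
        exact ⟨natZ u - natZ v, ⟨u, hu, v, hv, hvQ, rfl⟩, rfl⟩
    rw [← hmap] at hm
    obtain ⟨m₂, hm₂, hpm⟩ := hm
    have heq : m = m₂ + Pi.single (Fin.last n) (m (Fin.last n) - m₂ (Fin.last n)) :=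
      single_eq_of_proj_eq fun j => (congrFun hpm j).symm
    rw [heq]
    exact (diffMonoid Γ Q).add_mem hm₂ (single_last_mem hΓ hQe hv0 hv0Q _)

end Main
end BS

/-- p(M_Q \\ M_Q') = M_{Q'} \\ M_{Q'}', V_Q = p⁻¹(V_{Q'}), and R_Q = R_{Q'}. -/
theorem projection_MQ_VQ_RQ {n : ℕ} (Γ : Set (Fin (n+1) → ℕ))
    (hΓ : BS.IsMonIdeal Γ) (Q : Set (Fin (n+1) → ℝ))
    (hface : IsExposed ℝ (BS.newton Γ) Q)
    (hQe : ∀ q ∈ Q, q + Pi.single (Fin.last n) 1 ∈ Q)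
    (hnc : ¬ BS.InCoordHyp Q)
    (v0 : Fin (n+1) → ℕ) (hv0 : v0 ∈ Γ) (hv0Q : BS.natR v0 ∈ Q)
    (L' : (Fin n → ℝ) →ₗ[ℝ] ℝ) (hL' : ∀ q ∈ BS.pR '' Q, L' q = 1)
    (hL'rat : ∀ i, ∃ q : ℚ, L' (Pi.single i 1) = (q : ℝ)) :
    BS.pZ '' (BS.MQ Γ Q \ BS.MQk Γ Q v0 1) =
      BS.MQ (BS.pN '' Γ) (BS.pR '' Q) \ BS.MQk (BS.pN '' Γ) (BS.pR '' Q) (BS.pN v0) 1 ∧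
    (BS.VQ Q : Set (Fin (n+1) → ℝ)) = BS.pR ⁻¹' (BS.VQ (BS.pR '' Q)) ∧
    BS.RQ Γ Q v0 (L'.comp (LinearMap.funLeft ℝ ℝ Fin.castSucc)) =
      BS.RQ (BS.pN '' Γ) (BS.pR '' Q) (BS.pN v0) L' := by
  classical
  have hconv : Convex ℝ Q := hface.convex (convex_convexHull ℝ _)
  have hMQ : BS.MQ Γ Q = BS.pZ ⁻¹' BS.MQ (BS.pN '' Γ) (BS.pR '' Q) := by
    ext m
    have h := BS.diffMonoid_iff hΓ hQe hv0 hv0Q hconv (m - 1)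
    have hsub : BS.pZ (m - 1) = BS.pZ m - 1 := rfl
    rw [hsub] at h
    exact h
  have hMQk : BS.MQk Γ Q v0 1 =
      BS.pZ ⁻¹' BS.MQk (BS.pN '' Γ) (BS.pR '' Q) (BS.pN v0) 1 := by
    ext m
    have hsub : BS.pZ (m - ((1:ℕ):ℤ) • BS.natZ v0)
        = BS.pZ m - ((1:ℕ):ℤ) • BS.natZ (BS.pN v0) := by
      funext j; simp [BS.pZ, BS.natZ, BS.pN]
    show m - ((1:ℕ):ℤ) • BS.natZ v0 ∈ BS.MQ Γ Q ↔ _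
    rw [hMQ]
    simp only [Set.mem_preimage, hsub]
    rfl
  have c1 : BS.pZ '' (BS.MQ Γ Q \ BS.MQk Γ Q v0 1) =
      BS.MQ (BS.pN '' Γ) (BS.pR '' Q) \ BS.MQk (BS.pN '' Γ) (BS.pR '' Q) (BS.pN v0) 1 := by
    rw [hMQ, hMQk, ← Set.preimage_diff]
    exact Set.image_preimage_eq _ BS.pZ_surj
  have heVQ : (Pi.single (Fin.last n) 1 : Fin (n+1) → ℝ) ∈ BS.VQ Q := by
    have h1 := Submodule.subset_span (R := ℝ) (hQe _ hv0Q)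
    have h2 := Submodule.subset_span (R := ℝ) hv0Q
    have h3 := Submodule.sub_mem _ h1 h2
    simpa [BS.VQ] using h3
  have c2 : (BS.VQ Q : Set (Fin (n+1) → ℝ)) = BS.pR ⁻¹' (BS.VQ (BS.pR '' Q)) := by
    apply Set.Subset.antisymm
    · intro x hx
      have hle : BS.VQ Q ≤
          (BS.VQ (BS.pR '' Q)).comap (LinearMap.funLeft ℝ ℝ Fin.castSucc) :=
        Submodule.span_le.2 fun q hq => Submodule.subset_span ⟨q, hq, rfl⟩
      exact hle hx
    · intro x hx
      rw [Set.mem_preimage] at hx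
      have hx2 : BS.pR x ∈
          Submodule.map (LinearMap.funLeft ℝ ℝ Fin.castSucc) (BS.VQ Q) := by
        rw [BS.VQ, ← Submodule.span_image]
        exact hx
      obtain ⟨y, hy, hxy⟩ := hx2
      have heq : x = y + Pi.single (Fin.last n) (x (Fin.last n) - y (Fin.last n)) :=
        BS.single_eq_of_proj_eq fun j => (congrFun hxy j).symm
      have hsingle : Pi.single (Fin.last n) (x (Fin.last n) - y (Fin.last n))
          = (x (Fin.last n) - y (Fin.last n)) • (Pi.single (Fin.last n) 1 : Fin (n+1) → ℝ) := by
        funext i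
        by_cases hi : i = Fin.last n
        · subst hi; simp
        · simp [Pi.single_eq_of_ne hi]
      show x ∈ BS.VQ Q
      rw [heq, hsingle]
      exact Submodule.add_mem _ hy (Submodule.smul_mem _ _ heVQ)
  refine ⟨c1, c2, ?_⟩
  ext x
  simp only [BS.RQ, Set.mem_setOf_eq]
  constructor
  · rintro ⟨u, ⟨h1, h2⟩, h3, rfl⟩
    refine ⟨BS.pZ u, ⟨?_, ?_⟩, ?_, ?_⟩
    · rw [hMQ] at h1; exact h1
    · intro hc; exact h2 (by rw [hMQk]; exact hc)
    · have h3' : BS.toR u ∈ (BS.VQ Q : Set (Fin (n+1) → ℝ)) := h3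
      rw [c2] at h3'
      exact h3'
    · rfl
  · rintro ⟨u', ⟨h1, h2⟩, h3, rfl⟩
    have hpu : BS.pZ (Fin.snoc u' 0) = u' := by funext j; simp [BS.pZ]
    refine ⟨Fin.snoc u' 0, ⟨?_, ?_⟩, ?_, ?_⟩
    · rw [hMQ, Set.mem_preimage, hpu]; exact h1
    · intro hc
      rw [hMQk] at hc
      exact h2 (by rw [← hpu]; exact hc)
    · have hcast : BS.pR (BS.toR (Fin.snoc u' 0)) = BS.toR u' := by
        funext j; simp [BS.pR, BS.toR]
      have : BS.toR (Fin.snoc u' 0) ∈ (BS.VQ Q : Set (Fin (n+1) → ℝ)) := by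
        rw [c2, Set.mem_preimage, hcast]
        exact h3
      exact this
    · show - L' (BS.toR u') = _
      have : BS.toR (BS.pZ (Fin.snoc u' 0)) = BS.toR u' := by rw [hpu]
      exact congrArg (fun z => - L' z) this.symm
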